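/- Fix a function b : ℕ → ℕ with b(n) ≥ 1 and b(n) = o(n), and a function a : ℕ → ℕ with a(n) = o(n / b(n)). Then for all sufficiently large n, there is no (a(n), b(n))-BAPO that solves Match3_n over (Z_{n²})^n. -/

import Mathlib

set_option linter.unusedSectionVars false
set_option maxHeartbeats 2000000


open Finset Filter Asymptotics

/-- An `(a, b)`-BAPO (bounded attention prefix oracle): a prefix oracle `f` outputting
`a` bits, a binary attention function `g`, and a suffix oracle `h` that receives the
prefix-oracle output, an attended set of at most `b` (token, 1-based index) pairs from
the prefix, the suffix, and the split index. -/
structure BAPO (Sigma : Type) (Out : Type) (a b : ℕ) where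
  f : List Sigma → (Fin a → Bool)
  g : List Sigma → ℕ → Sigma → ℕ → Bool
  h : (Fin a → Bool) → Finset (Sigma × ℕ) → List Sigma → ℕ → Out

namespace BAPO

variable {Sigma Out : Type} {a b : ℕ}

/-- The set `𝔾 = {(xᵢ, i) : 1 ≤ i ≤ k, g(suffix, k, xᵢ, i) = 1}` of attended
candidates for a given prefix and suffix. -/
noncomputable def cands (M : BAPO Sigma Out a b) (pre suf : List Sigma) :
    Finset (Sigma × ℕ) :=
  letI := Classical.decEq Sigma
  (Finset.univ.filter fun i : Fin pre.length =>
      M.g suf pre.length (pre.get i) ((i : ℕ) + 1) = true).image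
    fun i => (pre.get i, (i : ℕ) + 1)

/-- The BAPO outputs `y` on input `x`: for every split index `k < |x|` and every
attended set `G ⊆ 𝔾` with `|G| = min b |𝔾|`, the suffix oracle outputs `y`. -/
def SolvesOn (M : BAPO Sigma Out a b) (x : List Sigma) (y : Out) : Prop :=
  ∀ k, k < x.length →
    ∀ G : Finset (Sigma × ℕ), G ⊆ M.cands (x.take k) (x.drop k) →
      G.card = min b (M.cands (x.take k) (x.drop k)).card →
      M.h (M.f (x.take k)) G (x.drop k) k = y

/-- The BAPO outputs a *correct* answer (one satisfying `good`) on input `x`: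
for every split index `k < |x|` and every attended set `G ⊆ 𝔾` with
`|G| = min b |𝔾|`, the suffix oracle's output satisfies `good`. -/
def SolvesOnP (M : BAPO Sigma Out a b) (x : List Sigma) (good : Out → Prop) : Prop :=
  ∀ k, k < x.length →
    ∀ G : Finset (Sigma × ℕ), G ⊆ M.cands (x.take k) (x.drop k) →
      G.card = min b (M.cands (x.take k) (x.drop k)).card →
      good (M.h (M.f (x.take k)) G (x.drop k) k)

end BAPO

section Basics
variable {m : ℕ} [NeZero m]

lemma exists_avoid (bad : Finset (ZMod m)) (h : bad.card < m) :
    ∃ v : ZMod m, v ∉ bad := by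
  by_contra hc
  push_neg at hc
  have : bad = Finset.univ := Finset.eq_univ_iff_forall.mpr hc
  rw [this, Finset.card_univ, ZMod.card] at h
  omega

lemma card_filter_nsmul_le (k : ℕ) (hk : 0 < k) (t : ZMod m) :
    (Finset.univ.filter fun v : ZMod m => k • v = t).card ≤ k := by
  rcases (Finset.univ.filter fun v : ZMod m => k • v = t).eq_empty_or_nonempty with h | ⟨v0, hv0⟩
  · rw [h]; simp
  · have hm : 0 < m := NeZero.pos m
    have key : ∀ v ∈ (Finset.univ.filter fun v : ZMod m => k • v = t),
        k * (v - v0).val = m * ((k * (v - v0).val) / m) := by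
      intro v hv
      simp only [Finset.mem_filter] at hv hv0
      have hz : k • (v - v0) = 0 := by
        rw [smul_sub, hv.2, hv0.2, sub_self]
      have : ((k * (v - v0).val : ℕ) : ZMod m) = 0 := by
        push_cast
        rw [ZMod.natCast_val, ZMod.cast_id]
        rw [← nsmul_eq_mul]
        exact hz
      have hdvd : m ∣ k * (v - v0).val := (ZMod.natCast_eq_zero_iff _ _).mp this
      exact (Nat.mul_div_cancel' hdvd).symm
    calc (Finset.univ.filter fun v : ZMod m => k • v = t).card
        ≤ (Finset.range k).card := by
          apply Finset.card_le_card_of_injOn (fun v => (k * (v - v0).val) / m)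
          · intro v hv
            rw [Finset.mem_coe, Finset.mem_range]
            have h1 : (v - v0).val < m := ZMod.val_lt _
            have h2 : k * (v - v0).val < k * m := by
              exact Nat.mul_lt_mul_of_le_of_lt (le_refl k) h1 hk
            exact Nat.div_lt_of_lt_mul (by linarith [h2])
          · intro v hv w hw heq
            have hv' := key v hv
            have hw' := key w hw
            simp only at heq
            have : k * (v - v0).val = k * (w - v0).val := by rw [hv', hw', heq]
            have : (v - v0).val = (w - v0).val := by
              exact Nat.eq_of_mul_eq_mul_left hk this
            have : v - v0 = w - v0 := ZMod.val_injective _ this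
            exact sub_left_injective this
      _ = k := Finset.card_range k

end Basics

section Pool
variable {m : ℕ} [NeZero m] {N : ℕ}

/-- target of query `i` -/
def Tgt (s : Fin N → ZMod m) (i : Fin N) : ZMod m := -(s i)

/-- no two used values sum to a target -/
def SumFree (s : Fin N → ZMod m) (U : Finset (ZMod m)) : Prop :=
  ∀ v1 ∈ U, ∀ v2 ∈ U, ∀ i, v1 + v2 ≠ Tgt s i

/-- `v` is a fresh generic value w.r.t. used set `U` -/
def PoolOK (s : Fin N → ZMod m) (U : Finset (ZMod m)) (v : ZMod m) : Prop :=
  v ∉ U ∧ (∀ u ∈ U, ∀ i, v + u ≠ Tgt s i) ∧ (∀ i, v + v ≠ Tgt s i)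

lemma poolOK_anti {s : Fin N → ZMod m} {U U' : Finset (ZMod m)} {v : ZMod m}
    (hUU : U ⊆ U') (h : PoolOK s U' v) : PoolOK s U v :=
  ⟨fun hv => h.1 (hUU hv), fun u hu => h.2.1 u (hUU hu), h.2.2⟩

lemma sumFree_insert {s : Fin N → ZMod m} {U : Finset (ZMod m)} {v : ZMod m}
    (hU : SumFree s U) (hv : PoolOK s U v) : SumFree s (insert v U) := by
  intro v1 h1 v2 h2 i
  rcases Finset.mem_insert.mp h1 with h1 | h1 <;> rcases Finset.mem_insert.mp h2 with h2 | h2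
  · rw [h1, h2]; exact hv.2.2 i
  · rw [h1]; exact hv.2.1 v2 h2 i
  · rw [h2, add_comm]; exact hv.2.1 v1 h1 i
  · exact hU v1 h1 v2 h2 i

lemma exists_poolOK (s : Fin N → ZMod m) (U : Finset (ZMod m))
    (h : U.card * (N + 2) + 2 * N < m) : ∃ v, PoolOK s U v := by
  classical
  set bad : Finset (ZMod m) :=
    U ∪ ((U ×ˢ (Finset.univ : Finset (Fin N))).image fun p => Tgt s p.2 - p.1)
      ∪ ((Finset.univ : Finset (Fin N)).biUnion fun i =>
          Finset.univ.filter fun v : ZMod m => 2 • v = Tgt s i) with hbad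
  have hcard : bad.card < m := by
    have h1 : ((U ×ˢ (Finset.univ : Finset (Fin N))).image fun p => Tgt s p.2 - p.1).card
        ≤ U.card * N := by
      calc _ ≤ (U ×ˢ (Finset.univ : Finset (Fin N))).card := Finset.card_image_le
        _ = U.card * N := by rw [Finset.card_product, Finset.card_univ, Fintype.card_fin]
    have h2 : ((Finset.univ : Finset (Fin N)).biUnion fun i =>
          Finset.univ.filter fun v : ZMod m => 2 • v = Tgt s i).card ≤ 2 * N := by
      calc _ ≤ ∑ i : Fin N, (Finset.univ.filter fun v : ZMod m => 2 • v = Tgt s i).card :=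
            Finset.card_biUnion_le
        _ ≤ ∑ _i : Fin N, 2 := Finset.sum_le_sum fun i _ => card_filter_nsmul_le 2 (by norm_num) _
        _ = 2 * N := by simp [mul_comm]
    calc bad.card ≤ U.card + U.card * N + 2 * N := by
          refine le_trans (Finset.card_union_le _ _) ?_
          have := Finset.card_union_le U ((U ×ˢ (Finset.univ : Finset (Fin N))).image
            fun p => Tgt s p.2 - p.1)
          omega
      _ < m := by nlinarith [h]
  obtain ⟨v, hv⟩ := exists_avoid bad hcard
  rw [hbad] at hv
  simp only [Finset.mem_union, Finset.mem_image, Finset.mem_biUnion, Finset.mem_filter,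
    Finset.mem_univ, true_and, not_or, not_exists, not_and, Finset.mem_product] at hv
  refine ⟨v, hv.1.1, ?_, ?_⟩
  · intro u hu i heq
    exact hv.1.2 (u, i) ⟨hu, trivial⟩ (by rw [← heq]; ring)
  · intro i heq
    exact hv.2 i (by rw [two_nsmul]; exact heq)


/-- Phase A: choose the `N` query values. -/
lemma phaseA (hm : N * N + 3 * N + 4 < m) :
    ∃ s : Fin N → ZMod m, Function.Injective s ∧ SumFree s (Finset.image s Finset.univ) := by
  classical
  have key : ∀ j, j ≤ N → ∃ l : List (ZMod m), l.length = j ∧ l.Nodup ∧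
      (∀ v1 ∈ l, ∀ v2 ∈ l, ∀ t ∈ l, v1 + v2 ≠ -t) := by
    intro j
    induction j with
    | zero => exact fun _ => ⟨[], rfl, List.nodup_nil, by simp⟩
    | succ j ih =>
      intro hj
      obtain ⟨l, hlen, hnd, hsf⟩ := ih (by omega)
      set L := l.toFinset with hL
      have hLcard : L.card ≤ j := by
        rw [hL]; calc l.toFinset.card ≤ l.length := l.toFinset_card_le
          _ = j := hlen
      set bad : Finset (ZMod m) :=
        L ∪ ((L ×ˢ L).image fun p => -(p.1 + p.2))
          ∪ (L.biUnion fun v => Finset.univ.filter fun σ : ZMod m => σ + σ = -v)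
          ∪ (Finset.univ.filter fun σ : ZMod m => σ + σ + σ = 0) with hbad
      have hcard : bad.card < m := by
        have c1 : ((L ×ˢ L).image fun p : ZMod m × ZMod m => -(p.1 + p.2)).card ≤ j * j :=
          le_trans Finset.card_image_le (by rw [Finset.card_product]; exact Nat.mul_le_mul hLcard hLcard)
        have c2 : (L.biUnion fun v => Finset.univ.filter fun σ : ZMod m => σ + σ = -v).card ≤ 2 * j := by
          calc _ ≤ ∑ v ∈ L, (Finset.univ.filter fun σ : ZMod m => σ + σ = -v).card :=
                Finset.card_biUnion_le
            _ ≤ ∑ _v ∈ L, 2 := by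
                refine Finset.sum_le_sum fun v _ => ?_
                have : (Finset.univ.filter fun σ : ZMod m => σ + σ = -v)
                    = (Finset.univ.filter fun σ : ZMod m => 2 • σ = -v) := by
                  apply Finset.filter_congr; intro x _; rw [two_nsmul]
                rw [this]; exact card_filter_nsmul_le 2 (by norm_num) _
            _ = 2 * L.card := by rw [Finset.sum_const, smul_eq_mul, mul_comm]
            _ ≤ 2 * j := by omega
        have c3 : (Finset.univ.filter fun σ : ZMod m => σ + σ + σ = 0).card ≤ 3 := by
          have : (Finset.univ.filter fun σ : ZMod m => σ + σ + σ = 0)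
              = (Finset.univ.filter fun σ : ZMod m => 3 • σ = 0) := by
            apply Finset.filter_congr; intro x _
            rw [show (3:ℕ) • x = x + x + x by rw [succ_nsmul, two_nsmul]]
          rw [this]; exact card_filter_nsmul_le 3 (by norm_num) _
        have := Finset.card_union_le (L ∪ ((L ×ˢ L).image fun p => -(p.1 + p.2))
            ∪ (L.biUnion fun v => Finset.univ.filter fun σ : ZMod m => σ + σ = -v))
            (Finset.univ.filter fun σ : ZMod m => σ + σ + σ = 0)
        have h2 := Finset.card_union_le (L ∪ ((L ×ˢ L).image fun p => -(p.1 + p.2)))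
            (L.biUnion fun v => Finset.univ.filter fun σ : ZMod m => σ + σ = -v)
        have h3 := Finset.card_union_le L ((L ×ˢ L).image fun p : ZMod m × ZMod m => -(p.1 + p.2))
        have hjN : j ≤ N := by omega
        calc bad.card ≤ j + j * j + 2 * j + 3 := by rw [hbad]; omega
          _ < m := by nlinarith
      obtain ⟨σ, hσ⟩ := exists_avoid bad hcard
      rw [hbad] at hσ
      simp only [Finset.mem_union, not_or, Finset.mem_image, Finset.mem_biUnion,
        Finset.mem_filter, Finset.mem_univ, true_and, not_exists, not_and,
        Finset.mem_product, List.mem_toFinset, hL] at hσ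
      obtain ⟨⟨⟨hσ1, hσ2⟩, hσ3⟩, hσ4⟩ := hσ
      refine ⟨σ :: l, by simp [hlen], List.nodup_cons.mpr ⟨hσ1, hnd⟩, ?_⟩
      intro v1 h1 v2 h2 t ht heq
      simp only [List.mem_cons] at h1 h2 ht
      -- case analysis
      rcases h1 with h1 | h1
      · rcases h2 with h2 | h2
        · rcases ht with ht | ht
          · subst h1; subst h2; subst ht
            exact hσ4 (by linear_combination heq)
          · subst h1; subst h2
            exact hσ3 t ht (by linear_combination heq)
        · rcases ht with ht | ht
          · subst h1; subst ht
            exact hσ3 v2 h2 (by linear_combination heq)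
          · subst h1
            exact hσ2 (v2, t) ⟨h2, ht⟩ (by linear_combination -heq)
      · rcases h2 with h2 | h2
        · rcases ht with ht | ht
          · subst h2; subst ht
            exact hσ3 v1 h1 (by linear_combination heq)
          · subst h2
            exact hσ2 (v1, t) ⟨h1, ht⟩ (by linear_combination -heq)
        · rcases ht with ht | ht
          · subst ht
            exact hσ2 (v1, v2) ⟨h1, h2⟩ (by linear_combination -heq)
          · exact hsf v1 h1 v2 h2 t ht heq
  obtain ⟨l, hlen, hnd, hsf⟩ := key N le_rfl
  refine ⟨fun i => l.get (Fin.cast hlen.symm i), ?_, ?_⟩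
  · intro i1 i2 h
    have := (List.nodup_iff_injective_get.mp hnd) h
    simpa [Fin.ext_iff] using this
  · intro v1 h1 v2 h2 i heq
    simp only [Finset.mem_image, Finset.mem_univ, true_and] at h1 h2
    obtain ⟨i1, rfl⟩ := h1
    obtain ⟨i2, rfl⟩ := h2
    have hmem : ∀ i : Fin N, l.get (Fin.cast hlen.symm i) ∈ l := by
      intro i; rw [List.get_eq_getElem]; exact List.getElem_mem _
    exact hsf _ (hmem i1) _ (hmem i2) _ (hmem i) heq


/-- attention can see nothing generic at free positions under query `i` -/
def Stuck (βi : ZMod m → ℕ → Bool) (s : Fin N → ZMod m) (U : Finset (ZMod m))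
    (free : Finset ℕ) : Prop :=
  ∀ z ∈ free, ∀ v, PoolOK s U v → βi v (z + 1) = false

lemma stuck_mono {βi : ZMod m → ℕ → Bool} {s : Fin N → ZMod m} {U U' : Finset (ZMod m)}
    {free free' : Finset ℕ} (hU : U ⊆ U') (hf : free' ⊆ free)
    (h : Stuck βi s U free) : Stuck βi s U' free' :=
  fun z hz v hv => h z (hf hz) v (poolOK_anti hU hv)

/-- inner greedy loop picking up to `r` crowd positions/values for one query -/
lemma innerCrowd (s : Fin N → ZMod m) (βi : ZMod m → ℕ → Bool) (zone : Finset ℕ) :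
    ∀ (r : ℕ) (U : Finset (ZMod m)) (res : Finset ℕ) (cv : ℕ → ZMod m),
    SumFree s U →
    ∃ (Zi : Finset ℕ) (cv' : ℕ → ZMod m) (U' : Finset (ZMod m)),
      U ⊆ U' ∧ U'.card ≤ U.card + Zi.card ∧ SumFree s U' ∧
      Zi ⊆ zone ∧ (Zi ∩ res = ∅) ∧ Zi.card ≤ r ∧
      (∀ z, z ∉ Zi → cv' z = cv z) ∧
      (∀ z ∈ Zi, cv' z ∈ U' ∧ βi (cv' z) (z + 1) = true) ∧
      (Zi.card = r ∨ Stuck βi s U' (zone \ (res ∪ Zi))) := by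
  intro r
  induction r with
  | zero =>
    intro U res cv hU
    exact ⟨∅, cv, U, le_refl _, by simp, hU, by simp, by simp, by simp, fun z _ => rfl,
      by simp, Or.inl rfl⟩
  | succ r ih =>
    intro U res cv hU
    by_cases hex : ∃ z ∈ zone \ res, ∃ v, PoolOK s U v ∧ βi v (z + 1) = true
    · obtain ⟨z, hz, v, hv, hb⟩ := hex
      obtain ⟨Zi', cv', U', hUU, hcard, hsf, hsub, hdisj, hle, hoff, hon, hend⟩ :=
        ih (insert v U) (insert z res) (Function.update cv z v) (sumFree_insert hU hv)
      have hzZi' : z ∉ Zi' := by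
        intro hmem
        have : z ∈ Zi' ∩ insert z res := Finset.mem_inter.mpr ⟨hmem, Finset.mem_insert_self _ _⟩
        rw [hdisj] at this; exact absurd this (Finset.notMem_empty z)
      have hzres : z ∉ res := (Finset.mem_sdiff.mp hz).2
      have hzzone : z ∈ zone := (Finset.mem_sdiff.mp hz).1
      refine ⟨insert z Zi', cv', U', le_trans (Finset.subset_insert v U) hUU, ?_, hsf, ?_, ?_, ?_,
        ?_, ?_, ?_⟩
      · rw [Finset.card_insert_of_notMem hzZi']
        calc U'.card ≤ (insert v U).card + Zi'.card := hcard
          _ ≤ U.card + 1 + Zi'.card := by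
              have := Finset.card_insert_le v U; omega
          _ = U.card + (Zi'.card + 1) := by omega
      · intro y hy
        rcases Finset.mem_insert.mp hy with rfl | hy
        · exact hzzone
        · exact hsub hy
      · apply Finset.eq_empty_iff_forall_notMem.mpr
        intro y hy
        obtain ⟨hy1, hy2⟩ := Finset.mem_inter.mp hy
        rcases Finset.mem_insert.mp hy1 with rfl | hy1
        · exact hzres hy2
        · have : y ∈ Zi' ∩ insert z res :=
            Finset.mem_inter.mpr ⟨hy1, Finset.mem_insert_of_mem hy2⟩
          rw [hdisj] at this; exact absurd this (Finset.notMem_empty y)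
      · rw [Finset.card_insert_of_notMem hzZi']; omega
      · intro y hy
        have hyz : y ≠ z := fun h => hy (h ▸ Finset.mem_insert_self z Zi')
        have : y ∉ Zi' := fun h => hy (Finset.mem_insert_of_mem h)
        rw [hoff y this, Function.update_of_ne hyz]
      · intro y hy
        rcases Finset.mem_insert.mp hy with rfl | hy
        · have : cv' y = v := by rw [hoff y hzZi', Function.update_self]
          rw [this]
          exact ⟨hUU (Finset.mem_insert_self v U), hb⟩
        · exact hon y hy
      · rcases hend with hend | hend
        · left; rw [Finset.card_insert_of_notMem hzZi', hend]
        · right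
          have : zone \ (insert z res ∪ Zi') = zone \ (res ∪ insert z Zi') := by
            congr 1
            ext y
            simp only [Finset.mem_union, Finset.mem_insert]
            tauto
          rwa [this] at hend
    · push_neg at hex
      refine ⟨∅, cv, U, le_refl _, by simp, hU, by simp, by simp, by simp, fun z _ => rfl,
        by simp, Or.inr ?_⟩
      intro z hz v hv
      rw [Finset.union_empty] at hz
      by_contra hb
      exact absurd (hex z hz v hv) (by simp [hb])


/-- Phase B: process every query, allocating crowds or certifying darkness -/
lemma phaseB (s : Fin N → ZMod m) (β : Fin N → ZMod m → ℕ → Bool) (zone : Finset ℕ)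
    (b : ℕ) (UA : Finset (ZMod m)) (hUA : SumFree s UA) :
    ∃ (U : Finset (ZMod m)) (res : Finset ℕ) (cv : ℕ → ZMod m) (Z : Fin N → Finset ℕ),
      UA ⊆ U ∧ U.card ≤ UA.card + N * b ∧ SumFree s U ∧
      res ⊆ zone ∧ res.card ≤ N * b ∧
      (∀ z ∈ res, cv z ∈ U) ∧
      (∀ i, Z i ⊆ res) ∧
      (∀ i, ∀ z ∈ Z i, β i (cv z) (z + 1) = true) ∧
      (∀ i, (Z i).card ≤ b) ∧
      (∀ i, (Z i).card ≠ b → Stuck (β i) s U (zone \ res)) := by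
  classical
  have key : ∀ j, j ≤ N →
    ∃ (U : Finset (ZMod m)) (res : Finset ℕ) (cv : ℕ → ZMod m) (Z : Fin N → Finset ℕ),
      UA ⊆ U ∧ U.card ≤ UA.card + j * b ∧ SumFree s U ∧
      res ⊆ zone ∧ res.card ≤ j * b ∧
      (∀ z ∈ res, cv z ∈ U) ∧
      (∀ i : Fin N, (i : ℕ) < j → Z i ⊆ res) ∧
      (∀ i : Fin N, (i : ℕ) < j → ∀ z ∈ Z i, β i (cv z) (z + 1) = true) ∧
      (∀ i : Fin N, (i : ℕ) < j → (Z i).card ≤ b) ∧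
      (∀ i : Fin N, (i : ℕ) < j → (Z i).card ≠ b → Stuck (β i) s U (zone \ res)) := by
    intro j
    induction j with
    | zero =>
      intro _
      exact ⟨UA, ∅, fun _ => 0, fun _ => ∅, le_refl _, by simp, hUA, by simp, by simp,
        by simp, by simp, by simp, by simp, by simp⟩
    | succ j ih =>
      intro hj
      obtain ⟨U, res, cv, Z, hUAU, hUcard, hsf, hrz, hrc, hcvU, hZres, hZβ, hZle, hstuck⟩ :=
        ih (by omega)
      set ij : Fin N := ⟨j, by omega⟩ with hij
      obtain ⟨Zi, cv', U', hUU, hcard', hsf', hsubz, hdisj, hle, hoff, hon, hend⟩ :=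
        innerCrowd s (β ij) zone b U res cv hsf
      have hnotmem : ∀ z ∈ Zi, z ∉ res := by
        intro z hz hzr
        have : z ∈ Zi ∩ res := Finset.mem_inter.mpr ⟨hz, hzr⟩
        rw [hdisj] at this; exact absurd this (Finset.notMem_empty z)
      refine ⟨U', res ∪ Zi, cv', Function.update Z ij Zi,
        le_trans hUAU hUU, ?_, hsf', ?_, ?_, ?_, ?_, ?_, ?_, ?_⟩
      · calc U'.card ≤ U.card + Zi.card := hcard'
          _ ≤ UA.card + j * b + b := by omega
          _ = UA.card + (j + 1) * b := by ring
      · exact Finset.union_subset hrz hsubz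
      · calc (res ∪ Zi).card ≤ res.card + Zi.card := Finset.card_union_le _ _
          _ ≤ j * b + b := by omega
          _ = (j + 1) * b := by ring
      · intro z hz
        rcases Finset.mem_union.mp hz with hz | hz
        · rw [hoff z (fun h => hnotmem z h hz)]
          exact hUU (hcvU z hz)
        · exact (hon z hz).1
      · intro i hi
        by_cases hieq : i = ij
        · subst hieq
          rw [Function.update_self]
          exact Finset.subset_union_right
        · rw [Function.update_of_ne hieq]
          exact (hZres i (by
            have : (i : ℕ) ≠ j := fun h => hieq (Fin.ext h)
            omega)).trans Finset.subset_union_left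
      · intro i hi z hz
        by_cases hieq : i = ij
        · subst hieq
          rw [Function.update_self] at hz
          exact (hon z hz).2
        · rw [Function.update_of_ne hieq] at hz
          have hiv : (i : ℕ) < j := by
            have : (i : ℕ) ≠ j := fun h => hieq (Fin.ext h)
            omega
          rw [hoff z (fun h => hnotmem z h (hZres i hiv hz))]
          exact hZβ i hiv z hz
      · intro i hi
        by_cases hieq : i = ij
        · subst hieq; rw [Function.update_self]; exact hle
        · rw [Function.update_of_ne hieq]
          exact hZle i (by
            have : (i : ℕ) ≠ j := fun h => hieq (Fin.ext h)
            omega)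
      · intro i hi hcZ
        by_cases hieq : i = ij
        · subst hieq
          rw [Function.update_self] at hcZ
          rcases hend with hend | hend
          · exact absurd hend hcZ
          · exact hend
        · rw [Function.update_of_ne hieq] at hcZ
          have hiv : (i : ℕ) < j := by
            have : (i : ℕ) ≠ j := fun h => hieq (Fin.ext h)
            omega
          exact stuck_mono hUU (Finset.sdiff_subset_sdiff (le_refl _) Finset.subset_union_left)
            (hstuck i hiv hcZ)
  obtain ⟨U, res, cv, Z, h1, h2, h3, h4, h5, h6, h7, h8, h9, h10⟩ := key N le_rfl
  exact ⟨U, res, cv, Z, h1, h2, h3, h4, h5, h6, fun i => h7 i i.2, fun i => h8 i i.2,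
    fun i => h9 i i.2, fun i => h10 i i.2⟩


lemma card_filter_addself_le (t : ZMod m) :
    (Finset.univ.filter fun v : ZMod m => v + v = t).card ≤ 2 := by
  have : (Finset.univ.filter fun v : ZMod m => v + v = t)
      = (Finset.univ.filter fun v : ZMod m => 2 • v = t) := by
    apply Finset.filter_congr; intro x _; rw [two_nsmul]
  rw [this]; exact card_filter_nsmul_le 2 (by norm_num) t

/-- Phase C: choose the toggle values `w`, dummies `δ`, partners `u`. -/
lemma phaseC (s : Fin N → ZMod m) (hsinj : Function.Injective s)
    (β : Fin N → ZMod m → ℕ → Bool) (q : Fin N → ℕ) (free : Finset ℕ)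
    (hq : ∀ j, q j ∈ free) (Dark : Fin N → Prop)
    (U0 : Finset (ZMod m)) (hsf0 : SumFree s U0)
    (hstuck0 : ∀ i, Dark i → Stuck (β i) s U0 free)
    (C : ℕ) (hC : U0.card ≤ C) (hm : (C + 3 * N + 3) * (3 * N + 6) < m) :
    ∃ (w δ u : Fin N → ZMod m) (U' : Finset (ZMod m)),
      U0 ⊆ U' ∧ U'.card ≤ U0.card + 3 * N ∧
      (∀ j, u j + w j = Tgt s j) ∧
      (∀ j, w j ∈ U' ∧ δ j ∈ U' ∧ u j ∈ U') ∧
      (∀ j, w j ∉ U0 ∧ δ j ∉ U0 ∧ u j ∉ U0) ∧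
      (∀ j i, Dark i → β i (w j) (q j + 1) = false ∧ β i (δ j) (q j + 1) = false) ∧
      (∀ j1 j2 : Fin N, j1 ≠ j2 → w j1 ≠ w j2 ∧ δ j1 ≠ δ j2 ∧ u j1 ≠ u j2 ∧
        w j1 ≠ δ j2 ∧ w j1 ≠ u j2 ∧ δ j1 ≠ u j2) ∧
      (∀ j, w j ≠ δ j ∧ w j ≠ u j ∧ δ j ≠ u j) ∧
      (∀ v1 ∈ U', ∀ v2 ∈ U', ∀ i, v1 + v2 = Tgt s i →
        (v1 = u i ∧ v2 = w i) ∨ (v1 = w i ∧ v2 = u i)) := by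
  classical
  have hTinj : ∀ i1 i2, Tgt s i1 = Tgt s i2 → i1 = i2 := by
    intro i1 i2 h
    exact hsinj (neg_inj.mp h)
  have key : ∀ j, j ≤ N →
    ∃ (w δ u : Fin N → ZMod m) (U' : Finset (ZMod m)),
      U0 ⊆ U' ∧ U'.card ≤ U0.card + 3 * j ∧
      (∀ l : Fin N, (l : ℕ) < j → u l + w l = Tgt s l) ∧
      (∀ l : Fin N, (l : ℕ) < j → w l ∈ U' ∧ δ l ∈ U' ∧ u l ∈ U') ∧
      (∀ l : Fin N, (l : ℕ) < j → w l ∉ U0 ∧ δ l ∉ U0 ∧ u l ∉ U0) ∧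
      (∀ l : Fin N, (l : ℕ) < j → ∀ i, Dark i →
        β i (w l) (q l + 1) = false ∧ β i (δ l) (q l + 1) = false) ∧
      (∀ l1 : Fin N, (l1 : ℕ) < j → ∀ l2 : Fin N, (l2 : ℕ) < j → l1 ≠ l2 →
        w l1 ≠ w l2 ∧ δ l1 ≠ δ l2 ∧ u l1 ≠ u l2 ∧
        w l1 ≠ δ l2 ∧ w l1 ≠ u l2 ∧ δ l1 ≠ u l2) ∧
      (∀ l : Fin N, (l : ℕ) < j → w l ≠ δ l ∧ w l ≠ u l ∧ δ l ≠ u l) ∧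
      (∀ v1 ∈ U', ∀ v2 ∈ U', ∀ i, v1 + v2 = Tgt s i →
        ((i : ℕ) < j ∧ ((v1 = u i ∧ v2 = w i) ∨ (v1 = w i ∧ v2 = u i)))) ∧
      (∀ i, Dark i → Stuck (β i) s U' free) := by
    intro j
    induction j with
    | zero =>
      intro _
      refine ⟨fun _ => 0, fun _ => 0, fun _ => 0, U0, le_refl _, by simp, by simp, by simp,
        by simp, by simp, by simp, by simp, ?_, hstuck0⟩
      intro v1 h1 v2 h2 i heq
      exact absurd heq (hsf0 v1 h1 v2 h2 i)
    | succ j ih =>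
      intro hj
      obtain ⟨w, δ, u, U, hU0U, hUcard, hEq, hMem, hNotin, hβf, hDist, hDistS, hG1, hStuck⟩ :=
        ih (by omega)
      set jf : Fin N := ⟨j, by omega⟩ with hjf
      -- pick δ_new
      have hUc : U.card ≤ C + 3 * N := by omega
      obtain ⟨δn, hδn⟩ : ∃ v, PoolOK s U v := by
        apply exists_poolOK
        have h1 : U.card * (N + 2) ≤ (C + 3 * N) * (N + 2) := Nat.mul_le_mul_right _ (by omega)
        have h2 : (C + 3 * N) * (N + 2) + 2 * N < (C + 3 * N + 3) * (3 * N + 6) := by nlinarith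
        omega
      set U1 : Finset (ZMod m) := insert δn U with hU1
      have hU1c : U1.card ≤ C + 3 * N + 1 := by
        rw [hU1]
        have := Finset.card_insert_le δn U; omega
      -- pick w_new avoiding the explicit bad set
      set tj : ZMod m := Tgt s jf with htj
      set bad : Finset (ZMod m) :=
        U1 ∪ ((U1 ×ˢ (Finset.univ : Finset (Fin N))).image fun p => Tgt s p.2 - p.1)
          ∪ ((Finset.univ : Finset (Fin N)).biUnion fun i =>
              Finset.univ.filter fun v : ZMod m => v + v = Tgt s i)
          ∪ (U1.image fun x => tj - x)
          ∪ ((U1 ×ˢ (Finset.univ : Finset (Fin N))).image fun p => tj + p.1 - Tgt s p.2)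
          ∪ ((Finset.univ : Finset (Fin N)).biUnion fun i =>
              Finset.univ.filter fun v : ZMod m => (tj - v) + (tj - v) = Tgt s i) with hbad
      have hbadcard : bad.card < m := by
        have c2 : ((U1 ×ˢ (Finset.univ : Finset (Fin N))).image
            fun p : ZMod m × Fin N => Tgt s p.2 - p.1).card ≤ U1.card * N := by
          refine le_trans Finset.card_image_le ?_
          rw [Finset.card_product, Finset.card_univ, Fintype.card_fin]
        have c3 : ((Finset.univ : Finset (Fin N)).biUnion fun i =>
            Finset.univ.filter fun v : ZMod m => v + v = Tgt s i).card ≤ 2 * N := by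
          refine le_trans Finset.card_biUnion_le ?_
          calc ∑ i : Fin N, (Finset.univ.filter fun v : ZMod m => v + v = Tgt s i).card
              ≤ ∑ _i : Fin N, 2 := Finset.sum_le_sum fun i _ => card_filter_addself_le _
            _ = 2 * N := by simp [mul_comm]
        have c4 : (U1.image fun x => tj - x).card ≤ U1.card := Finset.card_image_le
        have c5 : ((U1 ×ˢ (Finset.univ : Finset (Fin N))).image
            fun p : ZMod m × Fin N => tj + p.1 - Tgt s p.2).card ≤ U1.card * N := by
          refine le_trans Finset.card_image_le ?_
          rw [Finset.card_product, Finset.card_univ, Fintype.card_fin]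
        have c6 : ((Finset.univ : Finset (Fin N)).biUnion fun i =>
            Finset.univ.filter fun v : ZMod m => (tj - v) + (tj - v) = Tgt s i).card ≤ 2 * N := by
          refine le_trans Finset.card_biUnion_le ?_
          calc ∑ i : Fin N, (Finset.univ.filter
                fun v : ZMod m => (tj - v) + (tj - v) = Tgt s i).card
              ≤ ∑ _i : Fin N, 2 := by
                refine Finset.sum_le_sum fun i _ => ?_
                have : (Finset.univ.filter fun v : ZMod m => (tj - v) + (tj - v) = Tgt s i)
                    = (Finset.univ.filter fun v : ZMod m => v + v = tj + tj - Tgt s i) := by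
                  apply Finset.filter_congr; intro x _
                  constructor
                  · intro h; linear_combination -h
                  · intro h; linear_combination -h
                rw [this]
                exact card_filter_addself_le _
            _ = 2 * N := by simp [mul_comm]
        have e1 := Finset.card_union_le (U1 ∪ ((U1 ×ˢ (Finset.univ : Finset (Fin N))).image fun p => Tgt s p.2 - p.1)
          ∪ ((Finset.univ : Finset (Fin N)).biUnion fun i => Finset.univ.filter fun v : ZMod m => v + v = Tgt s i)
          ∪ (U1.image fun x => tj - x)
          ∪ ((U1 ×ˢ (Finset.univ : Finset (Fin N))).image fun p => tj + p.1 - Tgt s p.2))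
          ((Finset.univ : Finset (Fin N)).biUnion fun i => Finset.univ.filter fun v : ZMod m => (tj - v) + (tj - v) = Tgt s i)
        have e2 := Finset.card_union_le (U1 ∪ ((U1 ×ˢ (Finset.univ : Finset (Fin N))).image fun p => Tgt s p.2 - p.1)
          ∪ ((Finset.univ : Finset (Fin N)).biUnion fun i => Finset.univ.filter fun v : ZMod m => v + v = Tgt s i)
          ∪ (U1.image fun x => tj - x))
          ((U1 ×ˢ (Finset.univ : Finset (Fin N))).image fun p => tj + p.1 - Tgt s p.2)
        have e3 := Finset.card_union_le (U1 ∪ ((U1 ×ˢ (Finset.univ : Finset (Fin N))).image fun p => Tgt s p.2 - p.1)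
          ∪ ((Finset.univ : Finset (Fin N)).biUnion fun i => Finset.univ.filter fun v : ZMod m => v + v = Tgt s i))
          (U1.image fun x => tj - x)
        have e4 := Finset.card_union_le (U1 ∪ ((U1 ×ˢ (Finset.univ : Finset (Fin N))).image fun p => Tgt s p.2 - p.1))
          ((Finset.univ : Finset (Fin N)).biUnion fun i => Finset.univ.filter fun v : ZMod m => v + v = Tgt s i)
        have e5 := Finset.card_union_le U1 ((U1 ×ˢ (Finset.univ : Finset (Fin N))).image fun p => Tgt s p.2 - p.1)
        have hU1N : U1.card * N ≤ (C + 3 * N + 1) * N := Nat.mul_le_mul_right N hU1c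
        calc bad.card ≤ U1.card + U1.card * N + 2 * N + U1.card + U1.card * N + 2 * N := by
              rw [hbad]; omega
          _ ≤ (C + 3 * N + 1) * (2 * N + 2) + 4 * N := by nlinarith
          _ < m := by nlinarith
      obtain ⟨wn, hwn⟩ := exists_avoid bad hbadcard
      rw [hbad] at hwn
      simp only [Finset.mem_union, not_or, Finset.mem_image, Finset.mem_biUnion,
        Finset.mem_filter, Finset.mem_univ, true_and, not_exists, not_and,
        Finset.mem_product] at hwn
      obtain ⟨⟨⟨⟨⟨hw1, hw2⟩, hw3⟩, hw4⟩, hw5⟩, hw6⟩ := hwn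
      -- hw1 : wn ∉ U1 ; hw2 : no (x,i), Tgt i - x = wn ; hw3 : no i, wn + wn = Tgt i
      -- hw4 : no x ∈ U1, tj - x = wn ; hw5 : no (x,i), tj + x - Tgt i = wn
      -- hw6 : no i, (tj - wn) + (tj - wn) = Tgt i
      set un : ZMod m := tj - wn with hun
      have hwnPool : PoolOK s U1 wn := by
        refine ⟨hw1, ?_, ?_⟩
        · intro x hx i heq
          exact hw2 (x, i) ⟨hx, trivial⟩ (by linear_combination -heq)
        · intro i heq
          exact hw3 i heq
      have hunU1 : un ∉ U1 := by
        intro hmem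
        exact hw4 un hmem (by rw [hun]; ring)
      have hunwn : un ≠ wn := by
        intro h
        apply hw3 jf
        rw [hun] at h
        linear_combination -h
      have hwnU : wn ∉ U := fun h => hw1 (Finset.mem_insert_of_mem h)
      have hδnU : δn ∉ U := hδn.1
      have hunU : un ∉ U := fun h => hunU1 (Finset.mem_insert_of_mem h)
      have hunδn : un ≠ δn := fun h => hunU1 (h ▸ Finset.mem_insert_self δn U)
      have hwnδn : wn ≠ δn := fun h => hw1 (h ▸ Finset.mem_insert_self δn U)
      set U2 : Finset (ZMod m) := insert wn U1 with hU2
      set U3 : Finset (ZMod m) := insert un U2 with hU3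
      set w' := Function.update w jf wn with hw'
      set δ' := Function.update δ jf δn with hδ'
      set u' := Function.update u jf un with hu'
      have hUU3 : U ⊆ U3 := by
        intro x hx
        exact Finset.mem_insert_of_mem (Finset.mem_insert_of_mem (Finset.mem_insert_of_mem hx))
      have hwnU3 : wn ∈ U3 := Finset.mem_insert_of_mem (Finset.mem_insert_self _ _)
      have hδnU3 : δn ∈ U3 :=
        Finset.mem_insert_of_mem (Finset.mem_insert_of_mem (Finset.mem_insert_self _ _))
      have hunU3 : un ∈ U3 := Finset.mem_insert_self _ _
      have hwnPoolU : PoolOK s U wn := poolOK_anti (Finset.subset_insert δn U) hwnPool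
      have hequw : un + wn = Tgt s jf := by rw [hun]; ring
      -- helper sum facts
      have Hwx : ∀ x ∈ U1, ∀ i, wn + x ≠ Tgt s i := hwnPool.2.1
      have Hww : ∀ i, wn + wn ≠ Tgt s i := fun i h => hw3 i h
      have Hux : ∀ x ∈ U1, ∀ i, un + x ≠ Tgt s i := by
        intro x hx i heq
        apply hw5 (x, i) ⟨hx, trivial⟩
        rw [hun] at heq
        linear_combination heq
      have Huu : ∀ i, un + un ≠ Tgt s i := fun i h => hw6 i h
      have Huwi : ∀ i, un + wn = Tgt s i → i = jf := by
        intro i h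
        exact (hTinj jf i (by rw [← hequw, h])).symm
      have hδU1 : δn ∈ U1 := Finset.mem_insert_self _ _
      have hUsubU1 : U ⊆ U1 := Finset.subset_insert _ _
      -- the new combined G1 property
      have hG1' : ∀ v1 ∈ U3, ∀ v2 ∈ U3, ∀ i, v1 + v2 = Tgt s i →
          ((i : ℕ) < j + 1 ∧ ((v1 = u' i ∧ v2 = w' i) ∨ (v1 = w' i ∧ v2 = u' i))) := by
        intro v1 h1 v2 h2 i heq
        have hjlt : ((jf : Fin N) : ℕ) < j + 1 := by simp [hjf]
        rcases Finset.mem_insert.mp h1 with h1 | h1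
        · -- v1 = un
          rcases Finset.mem_insert.mp h2 with h2 | h2
          · rw [h1, h2] at heq; exact absurd heq (Huu i)
          · rcases Finset.mem_insert.mp h2 with h2 | h2
            · -- v2 = wn
              have hij : i = jf := Huwi i (h1 ▸ h2 ▸ heq)
              subst hij
              refine ⟨hjlt, Or.inl ⟨?_, ?_⟩⟩
              · rw [h1, hu', Function.update_self]
              · rw [h2, hw', Function.update_self]
            · rw [h1] at heq; exact absurd heq (Hux v2 h2 i)
        · rcases Finset.mem_insert.mp h1 with h1 | h1
          · -- v1 = wn
            rcases Finset.mem_insert.mp h2 with h2 | h2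
            · -- v2 = un
              have : un + wn = Tgt s i := by rw [← heq, h1, h2]; ring
              have hij : i = jf := Huwi i this
              subst hij
              refine ⟨hjlt, Or.inr ⟨?_, ?_⟩⟩
              · rw [h1, hw', Function.update_self]
              · rw [h2, hu', Function.update_self]
            · rcases Finset.mem_insert.mp h2 with h2 | h2
              · rw [h1, h2] at heq; exact absurd heq (Hww i)
              · rw [h1] at heq; exact absurd heq (Hwx v2 h2 i)
          · -- v1 ∈ U1
            rcases Finset.mem_insert.mp h2 with h2 | h2
            · -- v2 = un
              have : un + v1 = Tgt s i := by rw [← heq, h2]; ring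
              exact absurd this (Hux v1 h1 i)
            · rcases Finset.mem_insert.mp h2 with h2 | h2
              · -- v2 = wn
                have : wn + v1 = Tgt s i := by rw [← heq, h2]; ring
                exact absurd this (Hwx v1 h1 i)
              · -- both in U1
                rcases Finset.mem_insert.mp h1 with h1 | h1
                · -- v1 = δn
                  rcases Finset.mem_insert.mp h2 with h2 | h2
                  · rw [h1, h2] at heq; exact absurd heq (hδn.2.2 i)
                  · rw [h1] at heq; exact absurd heq (fun h => hδn.2.1 v2 h2 i h)
                · rcases Finset.mem_insert.mp h2 with h2 | h2
                  · have : δn + v1 = Tgt s i := by rw [← heq, h2]; ring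
                    exact absurd this (hδn.2.1 v1 h1 i)
                  · -- both in U : old G1
                    obtain ⟨hlt, hcase⟩ := hG1 v1 h1 v2 h2 i heq
                    have hine : i ≠ jf := by
                      intro h
                      rw [h, hjf] at hlt
                      simp at hlt
                    refine ⟨by omega, ?_⟩
                    rw [hu', hw', Function.update_of_ne hine, Function.update_of_ne hine]
                    exact hcase
      -- assemble
      refine ⟨w', δ', u', U3, le_trans hU0U hUU3, ?_, ?_, ?_, ?_, ?_, ?_, ?_, hG1', ?_⟩
      · have i1 := Finset.card_insert_le un U2
        have i2 := Finset.card_insert_le wn U1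
        have i3 := Finset.card_insert_le δn U
        rw [hU3, hU2, hU1] at *
        omega
      · intro l hl
        by_cases hle : l = jf
        · subst hle
          rw [hw', hu', Function.update_self, Function.update_self]
          exact hequw
        · have hlj : (l : ℕ) < j := by
            have : (l : ℕ) ≠ j := fun h => hle (Fin.ext (by rw [h, hjf]))
            omega
          rw [hw', hu', Function.update_of_ne hle, Function.update_of_ne hle]
          exact hEq l hlj
      · intro l hl
        by_cases hle : l = jf
        · subst hle
          rw [hw', hδ', hu', Function.update_self, Function.update_self, Function.update_self]
          exact ⟨hwnU3, hδnU3, hunU3⟩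
        · have hlj : (l : ℕ) < j := by
            have : (l : ℕ) ≠ j := fun h => hle (Fin.ext (by rw [h, hjf]))
            omega
          rw [hw', hδ', hu', Function.update_of_ne hle, Function.update_of_ne hle,
            Function.update_of_ne hle]
          obtain ⟨a1, a2, a3⟩ := hMem l hlj
          exact ⟨hUU3 a1, hUU3 a2, hUU3 a3⟩
      · intro l hl
        by_cases hle : l = jf
        · subst hle
          rw [hw', hδ', hu', Function.update_self, Function.update_self, Function.update_self]
          exact ⟨fun h => hwnU (hU0U h), fun h => hδnU (hU0U h), fun h => hunU (hU0U h)⟩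
        · have hlj : (l : ℕ) < j := by
            have : (l : ℕ) ≠ j := fun h => hle (Fin.ext (by rw [h, hjf]))
            omega
          rw [hw', hδ', hu', Function.update_of_ne hle, Function.update_of_ne hle,
            Function.update_of_ne hle]
          exact hNotin l hlj
      · intro l hl i hD
        by_cases hle : l = jf
        · subst hle
          rw [hw', hδ', Function.update_self, Function.update_self]
          exact ⟨hStuck i hD (q jf) (hq jf) wn hwnPoolU,
            hStuck i hD (q jf) (hq jf) δn hδn⟩
        · have hlj : (l : ℕ) < j := by
            have : (l : ℕ) ≠ j := fun h => hle (Fin.ext (by rw [h, hjf]))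
            omega
          rw [hw', hδ', Function.update_of_ne hle, Function.update_of_ne hle]
          exact hβf l hlj i hD
      · -- pairwise distinctness
        intro l1 hl1 l2 hl2 hne
        have hUne : ∀ x ∈ U, wn ≠ x ∧ δn ≠ x ∧ un ≠ x := by
          intro x hx
          exact ⟨fun h => hwnU (h ▸ hx), fun h => hδnU (h ▸ hx), fun h => hunU (h ▸ hx)⟩
        by_cases he1 : l1 = jf
        · subst he1
          have hl2j : (l2 : ℕ) < j := by
            have : (l2 : ℕ) ≠ j := fun h => hne (Fin.ext (by rw [h, hjf])).symm
            omega
          obtain ⟨a1, a2, a3⟩ := hMem l2 hl2j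
          rw [hw', hδ', hu', Function.update_self, Function.update_self, Function.update_self,
            Function.update_of_ne (Ne.symm hne), Function.update_of_ne (Ne.symm hne),
            Function.update_of_ne (Ne.symm hne)]
          exact ⟨(hUne _ a1).1, (hUne _ a2).2.1, (hUne _ a3).2.2,
            (hUne _ a2).1, (hUne _ a3).1, (hUne _ a3).2.1⟩
        · by_cases he2 : l2 = jf
          · subst he2
            have hl1j : (l1 : ℕ) < j := by
              have : (l1 : ℕ) ≠ j := fun h => he1 (Fin.ext (by rw [h, hjf]))
              omega
            obtain ⟨a1, a2, a3⟩ := hMem l1 hl1j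
            rw [hw', hδ', hu', Function.update_self, Function.update_self, Function.update_self,
              Function.update_of_ne he1, Function.update_of_ne he1, Function.update_of_ne he1]
            exact ⟨Ne.symm (hUne _ a1).1, Ne.symm (hUne _ a2).2.1, Ne.symm (hUne _ a3).2.2,
              Ne.symm (hUne _ a1).2.1, Ne.symm (hUne _ a1).2.2, Ne.symm (hUne _ a2).2.2⟩
          · have hl1j : (l1 : ℕ) < j := by
              have : (l1 : ℕ) ≠ j := fun h => he1 (Fin.ext (by rw [h, hjf]))
              omega
            have hl2j : (l2 : ℕ) < j := by
              have : (l2 : ℕ) ≠ j := fun h => he2 (Fin.ext (by rw [h, hjf]))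
              omega
            rw [hw', hδ', hu', Function.update_of_ne he1, Function.update_of_ne he1,
              Function.update_of_ne he1, Function.update_of_ne he2, Function.update_of_ne he2,
              Function.update_of_ne he2]
            exact hDist l1 hl1j l2 hl2j hne
      · intro l hl
        by_cases hle : l = jf
        · subst hle
          rw [hw', hδ', hu', Function.update_self, Function.update_self, Function.update_self]
          exact ⟨hwnδn, Ne.symm hunwn, Ne.symm hunδn⟩
        · have hlj : (l : ℕ) < j := by
            have : (l : ℕ) ≠ j := fun h => hle (Fin.ext (by rw [h, hjf]))
            omega
          rw [hw', hδ', hu', Function.update_of_ne hle, Function.update_of_ne hle,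
            Function.update_of_ne hle]
          exact hDistS l hlj
      · intro i hD
        exact stuck_mono hUU3 (le_refl _) (hStuck i hD)
  obtain ⟨w, δ, u, U', h1, h2, h3, h4, h5, h6, h7, h8, h9, h10⟩ := key N le_rfl
  refine ⟨w, δ, u, U', h1, h2, fun j => h3 j j.2, fun j => h4 j j.2, fun j => h5 j j.2,
    fun j => h6 j j.2, fun j1 j2 hne => h7 j1 j1.2 j2 j2.2 hne, fun j => h8 j j.2, ?_⟩
  intro v1 hv1 v2 hv2 i heq
  exact (h9 v1 hv1 v2 hv2 i heq).2


end Pool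

section Assembly
variable {Sigma Out : Type} {a b : ℕ}
lemma cands_eq_image [DecidableEq (Sigma × ℕ)] (M : BAPO Sigma Out a b)
    (pre suf : List Sigma) {L : ℕ}
    (hlen : pre.length = L) (F : Fin L → Sigma)
    (hF : ∀ (l : ℕ) (h : l < pre.length) (h2 : l < L), pre[l] = F ⟨l, h2⟩) :
    M.cands pre suf =
      (Finset.univ.filter fun l : Fin L =>
        M.g suf L (F l) ((l : ℕ) + 1) = true).image fun l => (F l, (l : ℕ) + 1) := by
  classical
  subst hlen
  unfold BAPO.cands
  ext p
  simp only [Finset.mem_image, Finset.mem_filter, Finset.mem_univ, true_and]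
  have hget : ∀ i : Fin pre.length, pre.get i = F i := by
    intro i
    rw [List.get_eq_getElem, hF (i : ℕ) i.isLt i.isLt]
  constructor
  · rintro ⟨i, hg, rfl⟩
    exact ⟨i, by rw [← hget i]; exact hg, by rw [hget i]⟩
  · rintro ⟨i, hg, rfl⟩
    exact ⟨i, by rw [hget i]; exact hg, by rw [hget i]⟩

lemma ofFn_take {n : ℕ} (hn : 0 < n) (x : Fin n → Sigma) :
    (List.ofFn x).take (n - 1) = List.ofFn (fun l : Fin (n - 1) => x ⟨l, by omega⟩) := by
  apply List.ext_getElem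
  · simp [Nat.min_eq_left (by omega : n - 1 ≤ n)]
  · intro i h1 h2
    rw [List.getElem_take, List.getElem_ofFn, List.getElem_ofFn]

lemma ofFn_drop {n : ℕ} (hn : 0 < n) (x : Fin n → Sigma) :
    (List.ofFn x).drop (n - 1) = [x ⟨n - 1, by omega⟩] := by
  apply List.ext_getElem
  · simp; omega
  · intro i h1 h2
    simp only [List.length_drop, List.length_ofFn] at h1
    simp only [List.length_singleton] at h2
    rw [List.getElem_drop, List.getElem_ofFn]
    have : i = 0 := by omega
    subst this
    simp

end Assembly

theorem bapo_main (n A B : ℕ) (h5 : 5 * ((A + 1) * (B + 4) + 2) ≤ n) (hn : 0 < n)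
    (M : BAPO (ZMod (n ^ 2)) Bool A B)
    (HM : ∀ x : Fin n → ZMod (n ^ 2),
      M.SolvesOn (List.ofFn x)
        (decide (∃ i j : Fin n, x ⟨n - 1, Nat.sub_lt hn Nat.one_pos⟩ + x i + x j = 0))) :
    False := by
  classical
  haveI : NeZero (n ^ 2) := ⟨by positivity⟩
  set N := A + 1 with hN
  set C0 := N * (B + 4) + 2 with hC0
  have hC0ge : 6 ≤ C0 := by
    have h4 : 4 ≤ N * (B + 4) := by
      calc 4 = 1 * 4 := by norm_num
      _ ≤ N * (B + 4) := Nat.mul_le_mul (by omega) (by omega)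
    omega
  have hnC0 : 5 * C0 ≤ n := h5
  have hNC0 : N ≤ C0 := by
    have : N * 1 ≤ N * (B + 4) := Nat.mul_le_mul_left N (by omega)
    omega
  have hNBC0 : N * B + 4 * N + 2 = C0 := by rw [hC0]; ring
  have h25 : 25 * (C0 * C0) ≤ n * n := by
    calc 25 * (C0 * C0) = (5 * C0) * (5 * C0) := by ring
      _ ≤ n * n := Nat.mul_le_mul hnC0 hnC0
  have hm1 : N * N + 3 * N + 4 < n ^ 2 := by
    rw [pow_two]
    nlinarith
  -- Phase A
  obtain ⟨s, hsinj, hsf⟩ := phaseA (m := n ^ 2) (N := N) hm1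
  set UA : Finset (ZMod (n ^ 2)) := Finset.image s Finset.univ with hUAdef
  have hUAcard : UA.card ≤ N := by
    rw [hUAdef]
    calc (Finset.image s Finset.univ).card ≤ (Finset.univ : Finset (Fin N)).card :=
          Finset.card_image_le
      _ = N := by simp
  -- attendance function
  set β : Fin N → ZMod (n ^ 2) → ℕ → Bool := fun i v p => M.g [s i] (n - 1) v p with hβdef
  set zone : Finset ℕ := Finset.Ico N (n - 1) with hzone
  -- Phase B
  obtain ⟨U, res, cv, Z, hUAU, hUcard, hsfU, hresz, hrescard, hcvU, hZres, hZβ, hZle, hstuck⟩ :=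
    phaseB s β zone B UA hsf
  set free : Finset ℕ := zone \ res with hfree
  have hzonecard : zone.card = n - 1 - N := by rw [hzone]; simp
  have hfreecard : N ≤ free.card := by
    have h1 : zone.card ≤ free.card + res.card := by
      rw [hfree]
      exact le_trans (Finset.card_le_card (by
        intro x hx
        by_cases hxr : x ∈ res
        · exact Finset.mem_union_right _ hxr
        · exact Finset.mem_union_left _ (Finset.mem_sdiff.mpr ⟨hx, hxr⟩)))
        (Finset.card_union_le _ _)
    omega
  -- toggle positions
  obtain ⟨Q, hQsub, hQcard⟩ := Finset.exists_subset_card_eq hfreecard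
  set q : Fin N → ℕ := fun j => (Q.equivFin.symm (Fin.cast hQcard.symm j) : ℕ) with hqdef
  have hqQ : ∀ j, q j ∈ Q := fun j => (Q.equivFin.symm (Fin.cast hQcard.symm j)).2
  have hqfree : ∀ j, q j ∈ free := fun j => hQsub (hqQ j)
  have hqinj : Function.Injective q := by
    intro j1 j2 h
    have h2 : (Q.equivFin.symm (Fin.cast hQcard.symm j1) : {x // x ∈ Q})
        = Q.equivFin.symm (Fin.cast hQcard.symm j2) := Subtype.ext h
    have := Q.equivFin.symm.injective h2
    have := Fin.cast_injective hQcard.symm |>.eq_iff.mp (by exact this)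
    exact this
  have hqzone : ∀ j, N ≤ q j ∧ q j < n - 1 := by
    intro j
    have := hqfree j
    rw [hfree] at this
    have := Finset.mem_sdiff.mp this |>.1
    rw [hzone] at this
    exact Finset.mem_Ico.mp this
  have hqres : ∀ j, q j ∉ res := by
    intro j
    have := hqfree j
    rw [hfree] at this
    exact (Finset.mem_sdiff.mp this).2
  -- Phase C
  set Dark : Fin N → Prop := fun i => (Z i).card ≠ B with hDark
  have hm2 : (N + N * B + 3 * N + 3) * (3 * N + 6) < n ^ 2 := by
    rw [pow_two]
    have e1 : N + N * B + 3 * N + 3 ≤ C0 + 1 := by omega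
    have e2 : 3 * N + 6 ≤ 3 * C0 := by omega
    calc (N + N * B + 3 * N + 3) * (3 * N + 6) ≤ (C0 + 1) * (3 * C0) := Nat.mul_le_mul e1 e2
      _ < n * n := by nlinarith
  obtain ⟨w, δ, u, U', hUU', hU'card, hEquw, hMem', hNotin', hβf, hDist, hDistS, hG1⟩ :=
    phaseC s hsinj β q free hqfree Dark U hsfU (fun i hD => hstuck i hD) (N + N * B)
      (by omega) hm2
  -- the filler value ρ
  obtain ⟨ρ, hρ⟩ : ∃ v, PoolOK s U' v := by
    apply exists_poolOK
    have e1 : U'.card ≤ C0 + 2 := by omega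
    have e2 : U'.card * (N + 2) ≤ (C0 + 2) * (N + 2) := Nat.mul_le_mul_right _ e1
    have e3 : (C0 + 2) * (N + 2) + 2 * N < n ^ 2 := by
      rw [pow_two]
      nlinarith
    omega
  set Ufin : Finset (ZMod (n ^ 2)) := insert ρ U' with hUfin
  have hG1fin : ∀ v1 ∈ Ufin, ∀ v2 ∈ Ufin, ∀ i, v1 + v2 = Tgt s i →
      (v1 = u i ∧ v2 = w i) ∨ (v1 = w i ∧ v2 = u i) := by
    intro v1 h1 v2 h2 i heq
    rcases Finset.mem_insert.mp h1 with h1 | h1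
    · rcases Finset.mem_insert.mp h2 with h2 | h2
      · rw [h1, h2] at heq; exact absurd heq (hρ.2.2 i)
      · rw [h1] at heq; exact absurd heq (hρ.2.1 v2 h2 i)
    · rcases Finset.mem_insert.mp h2 with h2 | h2
      · rw [h2] at heq
        have : ρ + v1 = Tgt s i := by rw [← heq]; ring
        exact absurd this (hρ.2.1 v1 h1 i)
      · exact hG1 v1 h1 v2 h2 i heq
  have hNn1 : N ≤ n - 1 := by omega
  -- the prefix value function
  set pv : Finset (Fin N) → ℕ → ZMod (n ^ 2) := fun R l =>
    if h : ∃ j, q j = l then (if h.choose ∈ R then w h.choose else δ h.choose)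
    else if h2 : l < N then u ⟨l, h2⟩ else (if l ∈ res then cv l else ρ) with hpvdef
  have hpv_q : ∀ (R : Finset (Fin N)) (j : Fin N),
      pv R (q j) = if j ∈ R then w j else δ j := by
    intro R j
    simp only [hpvdef]
    have hex : ∃ j', q j' = q j := ⟨j, rfl⟩
    rw [dif_pos hex]
    have hch : hex.choose = j := hqinj hex.choose_spec
    rw [hch]
  have hpv_notq : ∀ (l : ℕ), (∃ j, q j = l) → False → True := fun _ _ h => h.elim
  have hqge : ∀ j, N ≤ q j := fun j => (hqzone j).1
  have hpv_u : ∀ (R : Finset (Fin N)) (l : ℕ) (h2 : l < N), pv R l = u ⟨l, h2⟩ := by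
    intro R l h2
    simp only [hpvdef]
    rw [dif_neg (by rintro ⟨j, hj⟩; have := hqge j; omega), dif_pos h2]
  have hpv_res : ∀ (R : Finset (Fin N)) (l : ℕ), l ∈ res → pv R l = cv l := by
    intro R l hl
    have hlz : l ∈ zone := hresz hl
    rw [hzone] at hlz
    have hlz' := Finset.mem_Ico.mp hlz
    simp only [hpvdef]
    rw [dif_neg (by rintro ⟨j, hj⟩; exact hqres j (hj ▸ hl)), dif_neg (by omega), if_pos hl]
  have hpv_fill : ∀ (R : Finset (Fin N)) (l : ℕ), (¬∃ j, q j = l) → ¬ l < N → l ∉ res →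
      pv R l = ρ := by
    intro R l h1 h2 h3
    simp only [hpvdef]
    rw [dif_neg h1, dif_neg h2, if_neg h3]
  have hpv_noq : ∀ (R1 R2 : Finset (Fin N)) (l : ℕ), (¬∃ j, q j = l) → pv R1 l = pv R2 l := by
    intro R1 R2 l h
    simp only [hpvdef]
    rw [dif_neg h, dif_neg h]
  have hsU : ∀ i : Fin N, s i ∈ U := by
    intro i
    exact hUAU (by rw [hUAdef]; exact Finset.mem_image_of_mem s (Finset.mem_univ i))
  have hUUfin : U ⊆ Ufin := fun x hx =>
    Finset.mem_insert_of_mem (hUU' hx)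
  have hpv_mem : ∀ (R : Finset (Fin N)) (l : ℕ), pv R l ∈ Ufin := by
    intro R l
    by_cases h1 : ∃ j, q j = l
    · obtain ⟨j, hj⟩ := h1
      rw [← hj, hpv_q R j]
      by_cases hjR : j ∈ R
      · rw [if_pos hjR]; exact Finset.mem_insert_of_mem (hMem' j).1
      · rw [if_neg hjR]; exact Finset.mem_insert_of_mem (hMem' j).2.1
    · by_cases h2 : l < N
      · rw [hpv_u R l h2]; exact Finset.mem_insert_of_mem (hMem' ⟨l, h2⟩).2.2
      · by_cases h3 : l ∈ res
        · rw [hpv_res R l h3]; exact hUUfin (hcvU l h3)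
        · rw [hpv_fill R l h1 h2 h3]; exact Finset.mem_insert_self _ _
  -- full inputs
  set FF : Finset (Fin N) → Fin (n - 1) → ZMod (n ^ 2) := fun R l => pv R (l : ℕ) with hFFdef
  set xf : Finset (Fin N) → Fin N → Fin n → ZMod (n ^ 2) := fun R i0 α =>
    if h : (α : ℕ) < n - 1 then pv R (α : ℕ) else s i0 with hxfdef
  have hTake : ∀ R i0, (List.ofFn (xf R i0)).take (n - 1) = List.ofFn (FF R) := by
    intro R i0
    rw [ofFn_take hn]
    congr 1
    funext l
    simp only [hxfdef, hFFdef]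
    rw [dif_pos (by exact l.2)]
  have hDropL : ∀ R i0, (List.ofFn (xf R i0)).drop (n - 1) = [s i0] := by
    intro R i0
    rw [ofFn_drop hn]
    congr 1
    simp only [hxfdef]
    rw [dif_neg (by omega)]
  have hcands : ∀ R i0, M.cands (List.ofFn (FF R)) [s i0] =
      (Finset.univ.filter fun l : Fin (n - 1) =>
        M.g [s i0] (n - 1) (FF R l) ((l : ℕ) + 1) = true).image
        fun l => (FF R l, (l : ℕ) + 1) := by
    intro R i0
    exact cands_eq_image M _ _ List.length_ofFn (FF R)
      (fun l h h2 => by rw [List.getElem_ofFn])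
  -- the central contradiction derivation
  have key : ∀ R R' : Finset (Fin N), M.f (List.ofFn (FF R)) = M.f (List.ofFn (FF R')) →
      ∀ i0, i0 ∈ R → i0 ∉ R' → False := by
    intro R R' hfeq i0 hiR hiR'
    have hi0lt : (i0 : ℕ) < n - 1 := by have := i0.2; omega
    have hq0lt : q i0 < n - 1 := (hqzone i0).2
    -- the two answers
    have hlastR : xf R i0 ⟨n - 1, Nat.sub_lt hn Nat.one_pos⟩ = s i0 := by
      simp only [hxfdef]; rw [dif_neg (by omega)]
    have hlastR' : xf R' i0 ⟨n - 1, Nat.sub_lt hn Nat.one_pos⟩ = s i0 := by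
      simp only [hxfdef]; rw [dif_neg (by omega)]
    have hansR : ∃ α β2 : Fin n,
        xf R i0 ⟨n - 1, Nat.sub_lt hn Nat.one_pos⟩ + xf R i0 α + xf R i0 β2 = 0 := by
      refine ⟨⟨(i0 : ℕ), by omega⟩, ⟨q i0, by omega⟩, ?_⟩
      have e2 : xf R i0 ⟨(i0 : ℕ), by omega⟩ = u i0 := by
        simp only [hxfdef]
        rw [dif_pos (by exact hi0lt)]
        have := hpv_u R (i0 : ℕ) i0.2
        rw [this]
      have e3 : xf R i0 ⟨q i0, by omega⟩ = w i0 := by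
        simp only [hxfdef]
        rw [dif_pos (by exact hq0lt)]
        rw [hpv_q R i0, if_pos hiR]
      rw [hlastR, e2, e3, add_assoc, hEquw i0]
      simp [Tgt]
    have hansR' : ¬ ∃ α β2 : Fin n,
        xf R' i0 ⟨n - 1, Nat.sub_lt hn Nat.one_pos⟩ + xf R' i0 α + xf R' i0 β2 = 0 := by
      rintro ⟨α, β2, hsum⟩
      rw [hlastR'] at hsum
      have hval : ∀ γ : Fin n, xf R' i0 γ ∈ Ufin := by
        intro γ
        simp only [hxfdef]
        by_cases hγ : (γ : ℕ) < n - 1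
        · rw [dif_pos hγ]; exact hpv_mem R' γ
        · rw [dif_neg hγ]; exact hUUfin (hsU i0)
      have htgt : xf R' i0 α + xf R' i0 β2 = Tgt s i0 := by
        simp only [Tgt]; linear_combination hsum
      have hww := hG1fin _ (hval α) _ (hval β2) i0 htgt
      have hwmem : ∃ γ : Fin n, xf R' i0 γ = w i0 := by
        rcases hww with ⟨_, h⟩ | ⟨h, _⟩
        · exact ⟨β2, h⟩
        · exact ⟨α, h⟩
      obtain ⟨γ, hγ⟩ := hwmem
      have hwU' : w i0 ∈ U' := (hMem' i0).1
      have hwU : w i0 ∉ U := (hNotin' i0).1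
      by_cases hγlt : (γ : ℕ) < n - 1
      · have hpvw : pv R' (γ : ℕ) = w i0 := by
          rw [← hγ]; simp only [hxfdef]; rw [dif_pos hγlt]
        by_cases hex : ∃ j, q j = (γ : ℕ)
        · obtain ⟨j, hj⟩ := hex
          rw [← hj, hpv_q R' j] at hpvw
          by_cases hjR : j ∈ R'
          · rw [if_pos hjR] at hpvw
            have hji : j = i0 := by
              by_contra hne
              exact (hDist j i0 hne).1 hpvw
            exact hiR' (hji ▸ hjR)
          · rw [if_neg hjR] at hpvw
            by_cases hji : j = i0
            · subst hji; exact (hDistS j).1 hpvw.symm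
            · exact (hDist i0 j (fun h => hji h.symm)).2.2.2.1 hpvw.symm
        · by_cases hlN : (γ : ℕ) < N
          · rw [hpv_u R' (γ : ℕ) hlN] at hpvw
            by_cases hji : (⟨(γ : ℕ), hlN⟩ : Fin N) = i0
            · rw [hji] at hpvw
              exact (hDistS i0).2.1 hpvw.symm
            · exact (hDist i0 ⟨(γ : ℕ), hlN⟩ (fun h => hji h.symm)).2.2.2.2.1 hpvw.symm
          · by_cases hres3 : (γ : ℕ) ∈ res
            · rw [hpv_res R' (γ : ℕ) hres3] at hpvw
              exact hwU (hpvw ▸ hcvU _ hres3)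
            · rw [hpv_fill R' (γ : ℕ) hex hlN hres3] at hpvw
              exact hρ.1 (hpvw ▸ hwU')
      · have : xf R' i0 γ = s i0 := by
          simp only [hxfdef]; rw [dif_neg hγlt]
        rw [this] at hγ
        exact hwU (hγ ▸ hsU i0)
    -- SolvesOn facts
    have hlenR : n - 1 < (List.ofFn (xf R i0)).length := by
      rw [List.length_ofFn]; omega
    have hlenR' : n - 1 < (List.ofFn (xf R' i0)).length := by
      rw [List.length_ofFn]; omega
    have hcandsR : M.cands ((List.ofFn (xf R i0)).take (n - 1))
        ((List.ofFn (xf R i0)).drop (n - 1)) =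
        (Finset.univ.filter fun l : Fin (n - 1) =>
          M.g [s i0] (n - 1) (FF R l) ((l : ℕ) + 1) = true).image
          fun l => (FF R l, (l : ℕ) + 1) := by
      rw [hTake R i0, hDropL R i0, hcands R i0]
    have hcandsR' : M.cands ((List.ofFn (xf R' i0)).take (n - 1))
        ((List.ofFn (xf R' i0)).drop (n - 1)) =
        (Finset.univ.filter fun l : Fin (n - 1) =>
          M.g [s i0] (n - 1) (FF R' l) ((l : ℕ) + 1) = true).image
          fun l => (FF R' l, (l : ℕ) + 1) := by
      rw [hTake R' i0, hDropL R' i0, hcands R' i0]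
    -- pick a common valid attended set G
    have hG : ∃ G : Finset (ZMod (n ^ 2) × ℕ),
        (G ⊆ M.cands ((List.ofFn (xf R i0)).take (n - 1)) ((List.ofFn (xf R i0)).drop (n - 1)) ∧
          G.card = min B (M.cands ((List.ofFn (xf R i0)).take (n - 1))
            ((List.ofFn (xf R i0)).drop (n - 1))).card) ∧
        (G ⊆ M.cands ((List.ofFn (xf R' i0)).take (n - 1)) ((List.ofFn (xf R' i0)).drop (n - 1)) ∧
          G.card = min B (M.cands ((List.ofFn (xf R' i0)).take (n - 1))
            ((List.ofFn (xf R' i0)).drop (n - 1))).card) := by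
      by_cases hZB : (Z i0).card = B
      · -- crowd case
        set G : Finset (ZMod (n ^ 2) × ℕ) := (Z i0).image (fun z => (cv z, z + 1)) with hGdef
        have hGsubgen : ∀ RR : Finset (Fin N),
            G ⊆ (Finset.univ.filter fun l : Fin (n - 1) =>
              M.g [s i0] (n - 1) (FF RR l) ((l : ℕ) + 1) = true).image
              fun l => (FF RR l, (l : ℕ) + 1) := by
          intro RR p hp
          obtain ⟨z, hz, rfl⟩ := Finset.mem_image.mp hp
          have hzres : z ∈ res := hZres i0 hz
          have hzz : z ∈ zone := hresz hzres
          rw [hzone] at hzz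
          obtain ⟨hz1, hz2⟩ := Finset.mem_Ico.mp hzz
          have hFFz : FF RR ⟨z, hz2⟩ = cv z := by
            simp only [hFFdef]
            exact hpv_res RR z hzres
          refine Finset.mem_image.mpr ⟨⟨z, hz2⟩, Finset.mem_filter.mpr ⟨Finset.mem_univ _, ?_⟩, ?_⟩
          · rw [hFFz]
            have := hZβ i0 z hz
            simp only [hβdef] at this
            exact this
          · rw [hFFz]
        have hGcard : G.card = B := by
          rw [hGdef, Finset.card_image_of_injOn, hZB]
          intro z1 _ z2 _ h
          simpa using congrArg Prod.snd h
        have hBle : B ≤ ((Finset.univ.filter fun l : Fin (n - 1) =>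
            M.g [s i0] (n - 1) (FF R l) ((l : ℕ) + 1) = true).image
            fun l => (FF R l, (l : ℕ) + 1)).card := by
          exact le_trans (le_of_eq hGcard.symm) (Finset.card_le_card (hGsubgen R))
        have hBle' : B ≤ ((Finset.univ.filter fun l : Fin (n - 1) =>
            M.g [s i0] (n - 1) (FF R' l) ((l : ℕ) + 1) = true).image
            fun l => (FF R' l, (l : ℕ) + 1)).card := by
          exact le_trans (le_of_eq hGcard.symm) (Finset.card_le_card (hGsubgen R'))
        refine ⟨G, ⟨?_, ?_⟩, ?_, ?_⟩
        · rw [hcandsR]; exact hGsubgen R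
        · rw [hcandsR, min_eq_left hBle]; exact hGcard
        · rw [hcandsR']; exact hGsubgen R'
        · rw [hcandsR', min_eq_left hBle']; exact hGcard
      · -- dark case : the two candidate sets coincide
        have hDark0 : Dark i0 := hZB
        have hceq : (Finset.univ.filter fun l : Fin (n - 1) =>
              M.g [s i0] (n - 1) (FF R l) ((l : ℕ) + 1) = true).image
              (fun l => (FF R l, (l : ℕ) + 1)) =
            (Finset.univ.filter fun l : Fin (n - 1) =>
              M.g [s i0] (n - 1) (FF R' l) ((l : ℕ) + 1) = true).image
              (fun l => (FF R' l, (l : ℕ) + 1)) := by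
          have claim : ∀ l : Fin (n - 1), (FF R l = FF R' l) ∨
              (M.g [s i0] (n - 1) (FF R l) ((l : ℕ) + 1) = false ∧
               M.g [s i0] (n - 1) (FF R' l) ((l : ℕ) + 1) = false) := by
            intro l
            by_cases hex : ∃ j, q j = (l : ℕ)
            · obtain ⟨j, hj⟩ := hex
              right
              have hbw := (hβf j i0 hDark0).1
              have hbδ := (hβf j i0 hDark0).2
              simp only [hβdef] at hbw hbδ
              constructor
              · simp only [hFFdef]
                rw [← hj, hpv_q R j]
                by_cases hjR : j ∈ R
                · rw [if_pos hjR]; exact hbw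
                · rw [if_neg hjR]; exact hbδ
              · simp only [hFFdef]
                rw [← hj, hpv_q R' j]
                by_cases hjR : j ∈ R'
                · rw [if_pos hjR]; exact hbw
                · rw [if_neg hjR]; exact hbδ
            · left
              simp only [hFFdef]
              exact hpv_noq R R' (l : ℕ) hex
          ext p
          simp only [Finset.mem_image, Finset.mem_filter, Finset.mem_univ, true_and]
          constructor
          · rintro ⟨l, hbit, rfl⟩
            rcases claim l with hcl | ⟨hf1, _⟩
            · exact ⟨l, by rw [← hcl]; exact hbit, by rw [hcl]⟩
            · rw [hbit] at hf1; exact absurd hf1 (by simp)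
          · rintro ⟨l, hbit, rfl⟩
            rcases claim l with hcl | ⟨_, hf2⟩
            · exact ⟨l, by rw [hcl]; exact hbit, by rw [hcl]⟩
            · rw [hbit] at hf2; exact absurd hf2 (by simp)
        obtain ⟨G, hGsub, hGcard⟩ := Finset.exists_subset_card_eq
          (min_le_right B ((Finset.univ.filter fun l : Fin (n - 1) =>
            M.g [s i0] (n - 1) (FF R l) ((l : ℕ) + 1) = true).image
            fun l => (FF R l, (l : ℕ) + 1)).card)
        refine ⟨G, ⟨?_, ?_⟩, ?_, ?_⟩
        · rw [hcandsR]; exact hGsub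
        · rw [hcandsR]; exact hGcard
        · rw [hcandsR', ← hceq]; exact hGsub
        · rw [hcandsR', ← hceq]; exact hGcard
    obtain ⟨G, ⟨hs1, hc1⟩, hs2, hc2⟩ := hG
    have hr1 := HM (xf R i0) (n - 1) hlenR G hs1 hc1
    have hr2 := HM (xf R' i0) (n - 1) hlenR' G hs2 hc2
    rw [hTake R i0, hDropL R i0] at hr1
    rw [hTake R' i0, hDropL R' i0] at hr2
    rw [hfeq] at hr1
    have hcontr := hr1.symm.trans hr2
    rw [decide_eq_true hansR, decide_eq_false hansR'] at hcontr
    exact absurd hcontr (by simp)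
  -- pigeonhole on the prefix oracle
  have hcard : Fintype.card (Fin A → Bool) < Fintype.card (Finset (Fin N)) := by
    rw [Fintype.card_finset, Fintype.card_fun]
    simp only [Fintype.card_fin, Fintype.card_bool]
    rw [hN]
    exact Nat.pow_lt_pow_right (by norm_num) (by omega)
  obtain ⟨R, R', hne, hfeq⟩ := Fintype.exists_ne_map_eq_of_card_lt
    (fun R : Finset (Fin N) => M.f (List.ofFn (FF R))) hcard
  have : ∃ i0, (i0 ∈ R ∧ i0 ∉ R') ∨ (i0 ∈ R' ∧ i0 ∉ R) := by
    by_contra hc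
    push_neg at hc
    apply hne
    ext i0
    have := hc i0
    tauto
  obtain ⟨i0, hi0⟩ := this
  rcases hi0 with ⟨h1, h2⟩ | ⟨h1, h2⟩
  · exact key R R' hfeq i0 h1 h2
  · exact key R' R hfeq.symm i0 h1 h2


/-- **Match3ₙ is BAPO-hard.** Fix a function `b : ℕ → ℕ` with `b(n) ≥ 1` and
`b(n) = o(n)`, and a function `a : ℕ → ℕ` with `a(n) = o(n / b(n))`. Then for all
sufficiently large `n`, there is no `(a(n), b(n))`-BAPO solving `Match3` over
`(ℤ/n²)^n`: outputting whether there exist `i, j` with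
`x_last + x_i + x_j ≡ 0 (mod n²)`. -/
theorem match3_hard (b : ℕ → ℕ) (hb1 : ∀ n, 1 ≤ b n)
    (hbo : (fun n : ℕ => (b n : ℝ)) =o[atTop] fun n : ℕ => (n : ℝ))
    (a : ℕ → ℕ)
    (hao : (fun n : ℕ => (a n : ℝ)) =o[atTop] fun n : ℕ => (n : ℝ) / (b n : ℝ)) :
    ∀ᶠ n in atTop, ∀ hn : 0 < n,
      ¬ ∃ M : BAPO (ZMod (n ^ 2)) Bool (a n) (b n),
        ∀ x : Fin n → ZMod (n ^ 2),
          M.SolvesOn (List.ofFn x)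
            (decide (∃ i j : Fin n,
              x ⟨n - 1, Nat.sub_lt hn Nat.one_pos⟩ + x i + x j = 0)) := by
  have hb' := (Asymptotics.isLittleO_iff.mp hbo) (by norm_num : (0:ℝ) < 1/50)
  have ha' := (Asymptotics.isLittleO_iff.mp hao) (by norm_num : (0:ℝ) < 1/50)
  filter_upwards [hb', ha', Filter.eventually_ge_atTop 300] with n hb ha hn300
  intro hn hex
  obtain ⟨M, HM⟩ := hex
  refine bapo_main n (a n) (b n) ?_ hn M HM
  -- numeric side condition from the asymptotic hypotheses
  have hbpos : (0:ℝ) < (b n : ℝ) := by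
    have := hb1 n
    positivity
  have hbn : 50 * b n ≤ n := by
    rw [Real.norm_eq_abs, Real.norm_eq_abs, abs_of_nonneg (by positivity),
      abs_of_nonneg (by positivity)] at hb
    have h2 : 50 * (b n : ℝ) ≤ (n : ℝ) := by linarith
    exact_mod_cast h2
  have han : 50 * (a n * b n) ≤ n := by
    rw [Real.norm_eq_abs, Real.norm_eq_abs, abs_of_nonneg (by positivity),
      abs_of_nonneg (by positivity)] at ha
    have h2 : (a n : ℝ) * (b n : ℝ) ≤ (1/50 * ((n : ℝ) / (b n : ℝ))) * (b n : ℝ) :=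
      mul_le_mul_of_nonneg_right ha (le_of_lt hbpos)
    rw [mul_assoc, div_mul_cancel₀ _ (ne_of_gt hbpos)] at h2
    have h3 : 50 * ((a n : ℝ) * (b n : ℝ)) ≤ (n : ℝ) := by linarith
    exact_mod_cast h3
  have hab : a n * 1 ≤ a n * b n := Nat.mul_le_mul_left _ (hb1 n)
  have hexp : (a n + 1) * (b n + 4) = a n * b n + 4 * a n + b n + 4 := by ring
  omega
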